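/- Let A₀ = [[a, b], [0, 1]] and A₁ = [[1, 0], [c, d]] be real 2×2 matrices with a ≠ 1, b·c ≠ 0, and ((1 − a)·(1 − d) − b·c)·b·c ≥ 0. Then the generalized spectral radius of {A₀, A₁} equals max{ρ(A₀), ρ(A₁)}; in particular {A₀, A₁} has the spectral finiteness property. -/

import Mathlib

set_option maxHeartbeats 1600000

open Matrix

/-- The spectral radius of a real 2×2 matrix: the maximum modulus of its
complex eigenvalues. -/
noncomputable def specRad (M : Matrix (Fin 2) (Fin 2) ℝ) : ℝ :=
  (spectralRadius ℂ (M.map Complex.ofReal)).toReal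

/-- `prodsOfLen 𝒜 n` is the set `𝒜ⁿ` of all products of `n` matrices taken
from `𝒜`. -/
def prodsOfLen (𝒜 : Set (Matrix (Fin 2) (Fin 2) ℝ)) (n : ℕ) :
    Set (Matrix (Fin 2) (Fin 2) ℝ) :=
  {M | ∃ l : List (Matrix (Fin 2) (Fin 2) ℝ),
    l.length = n ∧ (∀ X ∈ l, X ∈ 𝒜) ∧ M = l.prod}

/-- The generalized spectral radius of `𝒜`:
`sup_{n ≥ 1} max_{M ∈ 𝒜ⁿ} ρ(M)^(1/n)`. -/
noncomputable def gsr (𝒜 : Set (Matrix (Fin 2) (Fin 2) ℝ)) : ℝ :=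
  sSup {x : ℝ | ∃ n : ℕ, 1 ≤ n ∧ ∃ M ∈ prodsOfLen 𝒜 n,
    x = specRad M ^ ((1 : ℝ) / n)}

/-- `𝒜` has the spectral finiteness property if its generalized spectral
radius is realized as `ρ(M)^(1/n)` for some `n ≥ 1` and some `M ∈ 𝒜ⁿ`. -/
def hasSpectralFiniteness (𝒜 : Set (Matrix (Fin 2) (Fin 2) ℝ)) : Prop :=
  ∃ n : ℕ, 1 ≤ n ∧ ∃ M ∈ prodsOfLen 𝒜 n, gsr 𝒜 = specRad M ^ ((1 : ℝ) / n)

/- ### Auxiliary machinery -/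

private lemma muln1 {x y : ℝ} (hx : x ≤ 0) (hy : y ≤ 0) : 0 ≤ x*y := by nlinarith
private lemma muln2 {x y : ℝ} (hx : 0 ≤ x) (hy : y ≤ 0) : x*y ≤ 0 := by nlinarith
private lemma muln3 {x y : ℝ} (hx : x ≤ 0) (hy : 0 ≤ y) : x*y ≤ 0 := by nlinarith

private noncomputable def Qf (β γ : ℝ) (z0 z1 : ℂ) : ℝ :=
  Complex.normSq z0 + 2*β*((starRingEnd ℂ) z0 * z1).re + γ * Complex.normSq z1

private lemma Qf_coord (β γ : ℝ) (z0 z1 : ℂ) :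
    Qf β γ z0 z1 = (z0.re^2 + z0.im^2) + 2*β*(z0.re*z1.re + z0.im*z1.im)
      + γ*(z1.re^2+z1.im^2) := by
  simp [Qf, Complex.normSq_apply, Complex.mul_re, Complex.mul_im]
  ring

private lemma Qf_nonneg {β γ : ℝ} (hg : β^2 ≤ γ) (z0 z1 : ℂ) : 0 ≤ Qf β γ z0 z1 := by
  rw [Qf_coord]
  nlinarith [sq_nonneg (z0.re + β*z1.re), sq_nonneg (z0.im + β*z1.im),
    mul_nonneg (sub_nonneg.mpr hg) (add_nonneg (sq_nonneg z1.re) (sq_nonneg z1.im))]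

private lemma Qf_smul (β γ : ℝ) (μ z0 z1 : ℂ) :
    Qf β γ (μ*z0) (μ*z1) = Complex.normSq μ * Qf β γ z0 z1 := by
  rw [Qf_coord, Qf_coord]
  simp only [Complex.mul_re, Complex.mul_im, Complex.normSq_apply]
  ring

private lemma Qf_zero {β γ : ℝ} (hgb : β^2 ≤ γ) (z0 z1 : ℂ) (hz : 0 = Qf β γ z0 z1) :
    z0 = ((-β:ℝ):ℂ) * z1 ∧ ((γ - β^2) = 0 ∨ z1 = 0) := by
  have hco := Qf_coord β γ z0 z1
  rw [← hz] at hco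
  have s1 : (z0.re + β*z1.re) = 0 := by
    have hsq : (z0.re + β*z1.re)^2 ≤ 0 := by
      nlinarith [sq_nonneg (z0.im + β*z1.im),
        mul_nonneg (sub_nonneg.mpr hgb) (add_nonneg (sq_nonneg z1.re) (sq_nonneg z1.im))]
    nlinarith [sq_nonneg (z0.re + β*z1.re)]
  have s2 : (z0.im + β*z1.im) = 0 := by
    have hsq : (z0.im + β*z1.im)^2 ≤ 0 := by
      nlinarith [sq_nonneg (z0.re + β*z1.re),
        mul_nonneg (sub_nonneg.mpr hgb) (add_nonneg (sq_nonneg z1.re) (sq_nonneg z1.im))]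
    nlinarith [sq_nonneg (z0.im + β*z1.im)]
  have s3 : (γ - β^2)*(z1.re^2 + z1.im^2) = 0 := by
    have hsq : (γ - β^2)*(z1.re^2 + z1.im^2) ≤ 0 := by
      nlinarith [sq_nonneg (z0.re + β*z1.re), sq_nonneg (z0.im + β*z1.im)]
    have hnn : 0 ≤ (γ - β^2)*(z1.re^2 + z1.im^2) :=
      mul_nonneg (sub_nonneg.mpr hgb) (by positivity)
    linarith
  constructor
  · apply Complex.ext
    · simp only [Complex.mul_re, Complex.ofReal_re, Complex.ofReal_im, Complex.neg_re,
        Complex.neg_im, zero_mul, sub_zero]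
      push_cast
      linarith [s1]
    · simp only [Complex.mul_im, Complex.ofReal_re, Complex.ofReal_im]
      push_cast
      linarith [s2]
  · rcases mul_eq_zero.mp s3 with h' | h'
    · exact Or.inl h'
    · refine Or.inr (Complex.ext ?_ ?_)
      · have : z1.re = 0 := by nlinarith [sq_nonneg z1.re, sq_nonneg z1.im]
        simpa using this
      · have : z1.im = 0 := by nlinarith [sq_nonneg z1.re, sq_nonneg z1.im]
        simpa using this

private lemma sqLeHelper9 {x y : ℝ} (hx : 0 ≤ x) (hy : 0 ≤ y) (hxy : x^2 ≤ y^2) :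
    x ≤ y := by nlinarith

private lemma quad_nonneg {p q s : ℝ} (hp : 0 ≤ p) (hs : 0 ≤ s) (hq : q^2 ≤ p*s) (u v : ℝ) :
    0 ≤ p*u^2 + 2*q*(u*v) + s*v^2 := by
  rcases eq_or_lt_of_le hp with hp0 | hp0
  · have hq0 : q = 0 := by nlinarith [sq_nonneg q]
    rw [hq0, ← hp0]
    nlinarith [mul_nonneg hs (sq_nonneg v)]
  · nlinarith [sq_nonneg (p*u + q*v), mul_nonneg (sub_nonneg.mpr hq) (sq_nonneg v)]

private lemma Qf_step {β γ r2 x11 x12 x21 x22 : ℝ}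
    (hP : 0 ≤ r2 - (x11^2 + 2*β*(x11*x21) + γ*x21^2))
    (hS : 0 ≤ r2*γ - (x12^2 + 2*β*(x12*x22) + γ*x22^2))
    (hQ : (r2*β - (x11*x12 + β*(x11*x22 + x12*x21) + γ*(x21*x22)))^2 ≤
          (r2 - (x11^2 + 2*β*(x11*x21) + γ*x21^2)) *
          (r2*γ - (x12^2 + 2*β*(x12*x22) + γ*x22^2)))
    (z0 z1 : ℂ) :
    Qf β γ ((x11:ℂ)*z0 + (x12:ℂ)*z1) ((x21:ℂ)*z0 + (x22:ℂ)*z1) ≤ r2 * Qf β γ z0 z1 := by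
  have h1 := quad_nonneg hP hS hQ z0.re z1.re
  have h2 := quad_nonneg hP hS hQ z0.im z1.im
  rw [Qf_coord, Qf_coord]
  simp only [Complex.add_re, Complex.add_im, Complex.mul_re, Complex.mul_im,
    Complex.ofReal_re, Complex.ofReal_im]
  nlinarith [h1, h2]

private lemma eigvec_of_mem_spectrum {N : Matrix (Fin 2) (Fin 2) ℂ} {μ : ℂ}
    (hμ : μ ∈ spectrum ℂ N) : ∃ v : Fin 2 → ℂ, v ≠ 0 ∧ N *ᵥ v = μ • v := by
  rw [spectrum.mem_iff, Matrix.isUnit_iff_isUnit_det, isUnit_iff_ne_zero, not_not] at hμ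
  obtain ⟨v, hv, hv2⟩ := Matrix.exists_mulVec_eq_zero_iff.mpr hμ
  refine ⟨v, hv, ?_⟩
  rw [sub_mulVec, Algebra.algebraMap_eq_smul_one, smul_mulVec, one_mulVec,
    sub_eq_zero] at hv2
  exact hv2.symm

private lemma mem_spectrum_fin_two (M : Matrix (Fin 2) (Fin 2) ℂ) (μ : ℂ) :
    μ ∈ spectrum ℂ M ↔ (μ - M 0 0) * (μ - M 1 1) - M 0 1 * M 1 0 = 0 := by
  have hrep : (algebraMap ℂ (Matrix (Fin 2) (Fin 2) ℂ)) μ - M =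
      !![μ - M 0 0, -M 0 1; -M 1 0, μ - M 1 1] := by
    ext i j
    fin_cases i <;> fin_cases j <;>
      simp [Matrix.algebraMap_matrix_apply]
  rw [spectrum.mem_iff, Matrix.isUnit_iff_isUnit_det, isUnit_iff_ne_zero, not_not,
    hrep, Matrix.det_fin_two_of]
  constructor <;> intro h' <;> linear_combination h'

private lemma specRad_pair (M : Matrix (Fin 2) (Fin 2) ℝ) (x y : ℝ)
    (hspec : spectrum ℂ (M.map Complex.ofReal) = {(x:ℂ), (y:ℂ)}) :
    specRad M = max |x| |y| := by
  unfold specRad spectralRadius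
  rw [hspec]
  rw [show ({(x:ℂ), (y:ℂ)} : Set ℂ) = insert (x:ℂ) {(y:ℂ)} from rfl, iSup_insert,
    iSup_singleton]
  rw [ENNReal.toReal_sup ENNReal.coe_ne_top ENNReal.coe_ne_top]
  simp [Real.norm_eq_abs]

private lemma specRad_le_of_forall (M : Matrix (Fin 2) (Fin 2) ℝ) (C : ℝ) (hC : 0 ≤ C)
    (hball : ∀ μ ∈ spectrum ℂ (M.map Complex.ofReal), ‖μ‖ ≤ C) : specRad M ≤ C := by
  have hle : spectralRadius ℂ (M.map Complex.ofReal) ≤ ENNReal.ofReal C := by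
    apply iSup₂_le
    intro μ hμ
    rw [← enorm_eq_nnnorm, ← ofReal_norm]
    exact ENNReal.ofReal_le_ofReal (hball μ hμ)
  calc (spectralRadius ℂ (M.map Complex.ofReal)).toReal
      ≤ (ENNReal.ofReal C).toReal := ENNReal.toReal_mono ENNReal.ofReal_ne_top hle
    _ = C := ENNReal.toReal_ofReal hC

private lemma specRad_nonneg (M : Matrix (Fin 2) (Fin 2) ℝ) : 0 ≤ specRad M :=
  ENNReal.toReal_nonneg

/-- Example 9: for `A₀ = !![a, b; 0, 1]` and
`A₁ = !![1, 0; c, d]` with `a ≠ 1`, `b*c ≠ 0` and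
`((1-a)(1-d) - b*c) * (b*c) ≥ 0`, the generalized spectral radius of
`{A₀, A₁}` equals `max {ρ(A₀), ρ(A₁)}`; in particular `{A₀, A₁}` has the
spectral finiteness property. -/
theorem gsr_example9
    (a b c d : ℝ) (ha : a ≠ 1) (hbc : b * c ≠ 0)
    (h : ((1 - a) * (1 - d) - b * c) * (b * c) ≥ 0)
    (A0 A1 : Matrix (Fin 2) (Fin 2) ℝ)
    (hA0 : A0 = !![a, b; 0, 1]) (hA1 : A1 = !![1, 0; c, d]) :
    gsr {A0, A1} = max (specRad A0) (specRad A1) ∧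
      hasSpectralFiniteness {A0, A1} := by
  have hb : b ≠ 0 := left_ne_zero_of_mul hbc
  have hc : c ≠ 0 := right_ne_zero_of_mul hbc
  have hbc2 : 0 < (b*c)^2 := by rcases hbc.lt_or_gt with h' | h' <;> nlinarith
  have hd1 : d ≠ 1 := by
    intro h'; rw [h'] at h; nlinarith
  have he : (1:ℝ) - a ≠ 0 := sub_ne_zero.mpr (Ne.symm ha)
  have hf : (1:ℝ) - d ≠ 0 := sub_ne_zero.mpr (Ne.symm hd1)
  have hefbc : 0 < (1-a)*(1-d)*(b*c) := by nlinarith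
  set β : ℝ := -b/(1-a) with hβ
  set γ : ℝ := b*(1-d)/((1-a)*c) with hγ
  have keyγ : γ - β^2 = (((1-a)*(1-d)-b*c)*(b*c)) / ((1-a)*c)^2 := by
    rw [hβ, hγ]; field_simp
  have hgb : β^2 ≤ γ := by
    have h2 : 0 ≤ γ - β^2 := keyγ ▸ div_nonneg h (sq_nonneg ((1-a)*c))
    linarith
  set R0 : ℝ := max (a^2) 1 with hR0
  set R1 : ℝ := max (d^2) 1 with hR1
  have cert0P : 0 ≤ R0 - (a^2 + 2*β*(a*0) + γ*0^2) := by
    nlinarith [le_max_left (a^2) 1]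
  have cert0S : 0 ≤ R0*γ - (b^2 + 2*β*(b*1) + γ*1^2) := by
    rcases le_total (a^2) 1 with hcase | hcase
    · rw [hR0, max_eq_right hcase]
      have ha' : 0 < 1 - a := sub_pos.mpr (lt_of_le_of_ne (by nlinarith) ha)
      have ha2 : (0:ℝ) ≤ 1 + a := by nlinarith
      have eq1 : 1*γ - (b^2 + 2*β*(b*1) + γ*1^2) = b^2*(1+a)/(1-a) := by
        rw [hβ]; field_simp; ring
      rw [eq1]
      exact div_nonneg (mul_nonneg (sq_nonneg b) ha2) ha'.le
    · rw [hR0, max_eq_left hcase]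
      have eq1 : a^2*γ - (b^2 + 2*β*(b*1) + γ*1^2) = (a^2-1)*(γ-β^2) := by
        rw [hβ]; field_simp; ring
      rw [eq1]
      exact mul_nonneg (by nlinarith) (by linarith)
  have cert0Q : (R0*β - (a*b + β*(a*1 + b*0) + γ*(0*1)))^2 ≤
      (R0 - (a^2 + 2*β*(a*0) + γ*0^2)) * (R0*γ - (b^2 + 2*β*(b*1) + γ*1^2)) := by
    rcases le_total (a^2) 1 with hcase | hcase
    · rw [hR0, max_eq_right hcase]
      have eq1 : (1*β - (a*b + β*(a*1 + b*0) + γ*(0*1)))^2 =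
          (1 - (a^2 + 2*β*(a*0) + γ*0^2)) * (1*γ - (b^2 + 2*β*(b*1) + γ*1^2)) := by
        rw [hβ]; field_simp; ring
      exact le_of_eq eq1
    · rw [hR0, max_eq_left hcase]
      have hQ0 : a^2*β - (a*b + β*(a*1 + b*0) + γ*(0*1)) = 0 := by
        rw [hβ]; field_simp; ring
      have hP0 : a^2 - (a^2 + 2*β*(a*0) + γ*0^2) = 0 := by ring
      rw [hQ0, hP0]
      simp
  have cert1S : 0 ≤ R1*γ - (0^2 + 2*β*(0*d) + γ*d^2) := by
    rcases le_total (d^2) 1 with hcase | hcase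
    · rw [hR1, max_eq_right hcase]
      have eq1 : 1*γ - (0^2 + 2*β*(0*d) + γ*d^2) = γ*(1-d^2) := by ring
      rw [eq1]
      exact mul_nonneg (by nlinarith [sq_nonneg β]) (by linarith)
    · rw [hR1, max_eq_left hcase]
      have eq1 : d^2*γ - (0^2 + 2*β*(0*d) + γ*d^2) = 0 := by ring
      rw [eq1]
  have cert1P : 0 ≤ R1 - (1^2 + 2*β*(1*c) + γ*c^2) := by
    rcases le_total (d^2) 1 with hcase | hcase
    · rw [hR1, max_eq_right hcase]
      have hf' : 0 < 1 - d := sub_pos.mpr (lt_of_le_of_ne (by nlinarith) hd1)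
      have hebc : 0 < (1-a)*(b*c) := by nlinarith
      have hd2 : (0:ℝ) ≤ 1 + d := by nlinarith
      have eq1 : 1 - (1^2 + 2*β*(1*c) + γ*c^2) = ((1-a)*(b*c))*(1+d)/(1-a)^2 := by
        rw [hβ, hγ]; field_simp; ring
      rw [eq1]
      exact div_nonneg (mul_nonneg hebc.le hd2) (sq_nonneg _)
    · rw [hR1, max_eq_left hcase]
      have key : 0 ≤ (1+d)*((b*c-(1-a)*(1-d))*(1-a)) := by
        rcases hbc.lt_or_gt with hneg | hpos
        · have hef : (1-a)*(1-d) - b*c ≤ 0 := by nlinarith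
          rcases le_or_gt d (-1) with hd' | hd'
          · have he' : 1 - a < 0 := by nlinarith
            exact muln1 (by linarith)
              (muln2 (by linarith) he'.le)
          · have hd3 : 1 < d := lt_of_le_of_ne (by nlinarith) (Ne.symm hd1)
            have he' : 0 < 1 - a := by nlinarith
            exact mul_nonneg (by linarith) (mul_nonneg (by linarith) he'.le)
        · have hef : 0 ≤ (1-a)*(1-d) - b*c := by nlinarith
          rcases le_or_gt d (-1) with hd' | hd'
          · have he' : 0 < 1 - a := by nlinarith
            exact muln1 (by linarith)
              (muln3 (by linarith) he'.le)
          · have hd3 : 1 < d := lt_of_le_of_ne (by nlinarith) (Ne.symm hd1)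
            have he' : 1 - a < 0 := by nlinarith
            exact mul_nonneg (by linarith) (muln1 (by linarith) he'.le)
      have eq1 : d^2 - (1^2 + 2*β*(1*c) + γ*c^2) =
          ((1+d)*((b*c-(1-a)*(1-d))*(1-a)))/(1-a)^2 := by
        rw [hβ, hγ]; field_simp; ring
      rw [eq1]
      exact div_nonneg key (sq_nonneg _)
  have cert1Q : (R1*β - (1*0 + β*(1*d + 0*c) + γ*(c*d)))^2 ≤
      (R1 - (1^2 + 2*β*(1*c) + γ*c^2)) * (R1*γ - (0^2 + 2*β*(0*d) + γ*d^2)) := by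
    rcases le_total (d^2) 1 with hcase | hcase
    · rw [hR1, max_eq_right hcase]
      have eq1 : (1*β - (1*0 + β*(1*d + 0*c) + γ*(c*d)))^2 =
          (1 - (1^2 + 2*β*(1*c) + γ*c^2)) * (1*γ - (0^2 + 2*β*(0*d) + γ*d^2)) := by
        rw [hβ, hγ]; field_simp; ring
      exact le_of_eq eq1
    · rw [hR1, max_eq_left hcase]
      have hQ0 : d^2*β - (1*0 + β*(1*d + 0*c) + γ*(c*d)) = 0 := by
        rw [hβ, hγ]; field_simp; ring
      have hS0 : d^2*γ - (0^2 + 2*β*(0*d) + γ*d^2) = 0 := by ring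
      rw [hQ0, hS0]
      simp
  have step0 := fun z0 z1 => Qf_step cert0P cert0S cert0Q z0 z1
  have step1 := fun z0 z1 => Qf_step cert1P cert1S cert1Q z0 z1
  -- vector-level single-letter step
  have hstep : ∀ X ∈ ({A0, A1} : Set (Matrix (Fin 2) (Fin 2) ℝ)), ∀ w : Fin 2 → ℂ,
      Qf β γ (((X.map Complex.ofReal) *ᵥ w) 0) (((X.map Complex.ofReal) *ᵥ w) 1) ≤
        (max R0 R1) * Qf β γ (w 0) (w 1) := by
    intro X hX w
    have hQnn := Qf_nonneg hgb (w 0) (w 1)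
    rcases hX with rfl | hX1
    · have h0 : ((X.map Complex.ofReal) *ᵥ w) 0 = (a:ℂ) * w 0 + (b:ℂ) * w 1 := by
        rw [hA0]; simp [Matrix.mulVec, dotProduct, Fin.sum_univ_two]
      have h1 : ((X.map Complex.ofReal) *ᵥ w) 1 = w 1 := by
        rw [hA0]; simp [Matrix.mulVec, dotProduct, Fin.sum_univ_two]
      rw [h0, h1]
      have key := step0 (w 0) (w 1)
      simp only [Complex.ofReal_zero, Complex.ofReal_one, zero_mul, one_mul, zero_add] at key
      calc Qf β γ ((a:ℂ) * w 0 + (b:ℂ) * w 1) (w 1) ≤ R0 * Qf β γ (w 0) (w 1) := key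
        _ ≤ (max R0 R1) * Qf β γ (w 0) (w 1) :=
            mul_le_mul_of_nonneg_right (le_max_left _ _) hQnn
    · rw [Set.mem_singleton_iff] at hX1
      subst hX1
      have h0 : ((X.map Complex.ofReal) *ᵥ w) 0 = w 0 := by
        rw [hA1]; simp [Matrix.mulVec, dotProduct, Fin.sum_univ_two]
      have h1 : ((X.map Complex.ofReal) *ᵥ w) 1 = (c:ℂ) * w 0 + (d:ℂ) * w 1 := by
        rw [hA1]; simp [Matrix.mulVec, dotProduct, Fin.sum_univ_two]
      rw [h0, h1]
      have key := step1 (w 0) (w 1)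
      simp only [Complex.ofReal_zero, Complex.ofReal_one, zero_mul, one_mul, zero_add,
        add_zero] at key
      calc Qf β γ (w 0) ((c:ℂ) * w 0 + (d:ℂ) * w 1) ≤ R1 * Qf β γ (w 0) (w 1) := key
        _ ≤ (max R0 R1) * Qf β γ (w 0) (w 1) :=
            mul_le_mul_of_nonneg_right (le_max_right _ _) hQnn
  -- map is multiplicative
  have mapmul : ∀ M N : Matrix (Fin 2) (Fin 2) ℝ,
      (M*N).map Complex.ofReal = M.map Complex.ofReal * N.map Complex.ofReal := by
    intro M N
    ext i j
    simp [Matrix.map_apply, Matrix.mul_apply, Fin.sum_univ_two]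
  have mapone : ((1 : Matrix (Fin 2) (Fin 2) ℝ)).map Complex.ofReal = 1 :=
    Matrix.map_one _ Complex.ofReal_zero Complex.ofReal_one
  have hm1 : (1:ℝ) ≤ max R0 R1 := le_trans (by rw [hR0]; exact le_max_right _ _) (le_max_left _ _)
  -- product bound
  have hprod : ∀ l : List (Matrix (Fin 2) (Fin 2) ℝ),
      (∀ X ∈ l, X ∈ ({A0, A1} : Set (Matrix (Fin 2) (Fin 2) ℝ))) → ∀ w : Fin 2 → ℂ,
      Qf β γ (((l.prod.map Complex.ofReal) *ᵥ w) 0) (((l.prod.map Complex.ofReal) *ᵥ w) 1) ≤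
        (max R0 R1)^l.length * Qf β γ (w 0) (w 1) := by
    intro l
    induction l with
    | nil => intro _ w; simp [mapone, Matrix.one_mulVec]
    | cons X t ih =>
      intro hmem w
      have hX := hmem X (List.mem_cons_self)
      have ht : ∀ Y ∈ t, Y ∈ ({A0, A1} : Set (Matrix (Fin 2) (Fin 2) ℝ)) :=
        fun Y hY => hmem Y (List.mem_cons_of_mem _ hY)
      rw [List.prod_cons, mapmul, ← Matrix.mulVec_mulVec]
      calc Qf β γ _ _ ≤ (max R0 R1) * Qf β γ (((t.prod.map Complex.ofReal) *ᵥ w) 0)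
            (((t.prod.map Complex.ofReal) *ᵥ w) 1) := hstep X hX _
        _ ≤ (max R0 R1) * ((max R0 R1)^t.length * Qf β γ (w 0) (w 1)) :=
            mul_le_mul_of_nonneg_left (ih ht w) (by linarith)
        _ = (max R0 R1)^(X :: t).length * Qf β γ (w 0) (w 1) := by
            rw [List.length_cons, pow_succ]; ring
  -- the common fixed vector in the degenerate case
  have hfix : (1-a)*(1-d) = b*c →
      ∀ l : List (Matrix (Fin 2) (Fin 2) ℝ),
      (∀ X ∈ l, X ∈ ({A0, A1} : Set (Matrix (Fin 2) (Fin 2) ℝ))) →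
      (l.prod.map Complex.ofReal) *ᵥ ![(b:ℂ), ((1-a:ℝ):ℂ)] = ![(b:ℂ), ((1-a:ℝ):ℂ)] := by
    intro hK l
    induction l with
    | nil => intro _; rw [List.prod_nil, mapone, Matrix.one_mulVec]
    | cons X t ih =>
      intro hmem
      have hX := hmem X (List.mem_cons_self)
      have ht := fun Y hY => hmem Y (List.mem_cons_of_mem X hY)
      rw [List.prod_cons, mapmul, ← Matrix.mulVec_mulVec, ih ht]
      have hKC : ((1-a:ℝ):ℂ)*((1-d:ℝ):ℂ) = (b:ℂ)*(c:ℂ) := by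
        have := congrArg (Complex.ofReal) hK
        push_cast at this ⊢
        linear_combination this
      rcases hX with rfl | hX1
      · rw [hA0]
        funext i
        fin_cases i <;> simp [Matrix.mulVec, dotProduct, Fin.sum_univ_two] <;> push_cast <;> ring
      · rw [Set.mem_singleton_iff] at hX1
        subst hX1
        rw [hA1]
        funext i
        fin_cases i <;> simp [Matrix.mulVec, dotProduct, Fin.sum_univ_two]
        push_cast at hKC ⊢
        linear_combination (-1:ℂ) * hKC
  -- relation between real spectral radius candidates
  set mR : ℝ := max (max |a| 1) (max |d| 1) with hmR
  have hmR1 : (1:ℝ) ≤ mR := le_trans (le_max_right _ _) (le_max_left _ _)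
  have e0 : (max |a| 1)^2 = R0 := by
    rcases le_total |a| 1 with h' | h'
    · rw [max_eq_right h', hR0, max_eq_right (by nlinarith [sq_abs a, abs_nonneg a]), one_pow]
    · rw [max_eq_left h', hR0, max_eq_left (by nlinarith [sq_abs a, abs_nonneg a]), sq_abs]
  have e1 : (max |d| 1)^2 = R1 := by
    rcases le_total |d| 1 with h' | h'
    · rw [max_eq_right h', hR1, max_eq_right (by nlinarith [sq_abs d, abs_nonneg d]), one_pow]
    · rw [max_eq_left h', hR1, max_eq_left (by nlinarith [sq_abs d, abs_nonneg d]), sq_abs]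
  have hmr2 : mR^2 = max R0 R1 := by
    rcases le_total (max |a| 1) (max |d| 1) with h' | h'
    · rw [hmR, max_eq_right h', e1, max_eq_right]
      rw [← e0, ← e1]
      exact pow_le_pow_left₀ (le_trans zero_le_one (le_max_right _ _)) h' 2
    · rw [hmR, max_eq_left h', e0, max_eq_left]
      rw [← e0, ← e1]
      exact pow_le_pow_left₀ (le_trans zero_le_one (le_max_right _ _)) h' 2
  -- the eigenvalue bound
  have heig : ∀ l : List (Matrix (Fin 2) (Fin 2) ℝ),
      (∀ X ∈ l, X ∈ ({A0, A1} : Set (Matrix (Fin 2) (Fin 2) ℝ))) →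
      ∀ μ ∈ spectrum ℂ ((l.prod).map Complex.ofReal), ‖μ‖ ≤ mR ^ l.length := by
    intro l hmem μ hμ
    obtain ⟨v, hv, hev⟩ := eigvec_of_mem_spectrum hμ
    have hq := hprod l hmem v
    have hQv : Qf β γ (((l.prod.map Complex.ofReal) *ᵥ v) 0)
        (((l.prod.map Complex.ofReal) *ᵥ v) 1) = Complex.normSq μ * Qf β γ (v 0) (v 1) := by
      rw [hev]
      simp only [Pi.smul_apply, smul_eq_mul]
      exact Qf_smul β γ μ (v 0) (v 1)
    rw [hQv] at hq
    have hQnn := Qf_nonneg hgb (v 0) (v 1)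
    have hmRn : (0:ℝ) ≤ mR ^ l.length := pow_nonneg (le_trans zero_le_one hmR1) _
    rcases eq_or_lt_of_le hQnn with hz | hpos
    · -- degenerate: Qf v = 0
      obtain ⟨hv0, hcase2⟩ := Qf_zero hgb (v 0) (v 1) hz
      have hv1 : v 1 ≠ 0 := by
        intro h1z
        apply hv
        funext i
        fin_cases i
        · show v 0 = 0
          rw [hv0, h1z, mul_zero]
        · exact h1z
      have hγβ : γ - β^2 = 0 := hcase2.resolve_right hv1
      have hKz : (1-a)*(1-d) = b*c := by
        rw [hγβ] at keyγ
        field_simp at keyγ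
        have hk0 : b * ((1 - a) * (1 - d) - b * c) = 0 := by rw [← keyγ]; ring
        rcases mul_eq_zero.mp hk0 with h' | h'
        · exact absurd h' hb
        · linarith
      have hfixv := hfix hKz l hmem
      have hvrep : v = (v 1 / ((1-a:ℝ):ℂ)) • ![(b:ℂ), ((1-a:ℝ):ℂ)] := by
        have heC : ((1-a:ℝ):ℂ) ≠ 0 := Complex.ofReal_ne_zero.mpr he
        funext i
        fin_cases i
        · show v 0 = (v 1 / ((1-a:ℝ):ℂ)) * (b:ℂ)
          rw [hv0, hβ]
          push_cast
          field_simp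
        · show v 1 = (v 1 / ((1-a:ℝ):ℂ)) * ((1-a:ℝ):ℂ)
          exact (div_mul_cancel₀ (v 1) heC).symm
      have hNv : (l.prod.map Complex.ofReal) *ᵥ v = v := by
        rw [hvrep, Matrix.mulVec_smul, hfixv]
      rw [hev] at hNv
      have hμ1 : μ = 1 := by
        have h1 := congrFun hNv 1
        simp only [Pi.smul_apply, smul_eq_mul] at h1
        have h2 : (μ - 1) * v 1 = 0 := by linear_combination h1
        rcases mul_eq_zero.mp h2 with h' | h'
        · exact sub_eq_zero.mp h'
        · exact absurd h' hv1
      rw [hμ1, norm_one]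
      calc (1:ℝ) = 1^l.length := (one_pow _).symm
        _ ≤ mR^l.length := pow_le_pow_left₀ zero_le_one hmR1 _
    · have hn2 : Complex.normSq μ ≤ (max R0 R1)^l.length :=
        (mul_le_mul_iff_of_pos_right hpos).mp hq
      have hsq : ‖μ‖^2 ≤ (mR^l.length)^2 := by
        rw [← pow_mul, mul_comm l.length 2, pow_mul, hmr2]
        rw [Complex.sq_norm]
        exact hn2
      exact sqLeHelper9 (norm_nonneg μ) (le_trans zero_le_one (by
        calc (1:ℝ) = 1^l.length := (one_pow _).symm
          _ ≤ mR^l.length := pow_le_pow_left₀ zero_le_one hmR1 _)) hsq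
  -- spectra of the generators
  have hspec0 : spectrum ℂ (A0.map Complex.ofReal) = {((a:ℝ):ℂ), ((1:ℝ):ℂ)} := by
    ext μ
    rw [mem_spectrum_fin_two, hA0]
    simp [Matrix.map_apply, sub_eq_zero]
  have hspec1 : spectrum ℂ (A1.map Complex.ofReal) = {((1:ℝ):ℂ), ((d:ℝ):ℂ)} := by
    ext μ
    rw [mem_spectrum_fin_two, hA1]
    simp [Matrix.map_apply, sub_eq_zero]
  have hs0 : specRad A0 = max |a| 1 := by
    rw [specRad_pair A0 a 1 hspec0, abs_one]
  have hs1 : specRad A1 = max |d| 1 := by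
    rw [specRad_pair A1 1 d hspec1, abs_one, max_comm]
  have hmax : max (specRad A0) (specRad A1) = mR := by rw [hs0, hs1, hmR]
  -- membership of generators in the set
  have hmem0 : specRad A0 ∈ {x : ℝ | ∃ n : ℕ, 1 ≤ n ∧ ∃ M ∈ prodsOfLen {A0, A1} n,
      x = specRad M ^ ((1 : ℝ) / n)} := by
    refine ⟨1, le_refl 1, A0, ⟨[A0], rfl, ?_, List.prod_singleton.symm⟩, ?_⟩
    · intro X hX
      rw [List.mem_singleton] at hX
      subst hX
      exact Set.mem_insert _ _
    · rw [Nat.cast_one, div_one, Real.rpow_one]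
  have hmem1 : specRad A1 ∈ {x : ℝ | ∃ n : ℕ, 1 ≤ n ∧ ∃ M ∈ prodsOfLen {A0, A1} n,
      x = specRad M ^ ((1 : ℝ) / n)} := by
    refine ⟨1, le_refl 1, A1, ⟨[A1], rfl, ?_, List.prod_singleton.symm⟩, ?_⟩
    · intro X hX
      rw [List.mem_singleton] at hX
      subst hX
      exact Set.mem_insert_of_mem _ rfl
    · rw [Nat.cast_one, div_one, Real.rpow_one]
  -- upper bound
  have hub : ∀ x ∈ {x : ℝ | ∃ n : ℕ, 1 ≤ n ∧ ∃ M ∈ prodsOfLen {A0, A1} n,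
      x = specRad M ^ ((1 : ℝ) / n)}, x ≤ max (specRad A0) (specRad A1) := by
    rintro x ⟨n, hn, M, ⟨l, hlen, hmeml, hMeq⟩, rfl⟩
    rw [hmax]
    have hrad : specRad M ≤ mR^n := by
      rw [hMeq, ← hlen]
      exact specRad_le_of_forall _ _ (pow_nonneg (le_trans zero_le_one hmR1) _) (heig l hmeml)
    have hn0 : ((n:ℝ)) ≠ 0 := Nat.cast_ne_zero.mpr (by omega)
    calc specRad M ^ ((1:ℝ)/n) ≤ (mR^n) ^ ((1:ℝ)/n) :=
          Real.rpow_le_rpow (specRad_nonneg M) hrad (by positivity)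
      _ = mR := by
          rw [← Real.rpow_natCast mR n, ← Real.rpow_mul (by linarith)]
          rw [mul_one_div, div_self hn0, Real.rpow_one]
  have hbdd : BddAbove {x : ℝ | ∃ n : ℕ, 1 ≤ n ∧ ∃ M ∈ prodsOfLen {A0, A1} n,
      x = specRad M ^ ((1 : ℝ) / n)} := ⟨max (specRad A0) (specRad A1), fun x hx => hub x hx⟩
  have hgsr : gsr {A0, A1} = max (specRad A0) (specRad A1) := by
    unfold gsr
    apply le_antisymm
    · exact csSup_le ⟨specRad A0, hmem0⟩ hub
    · rcases max_choice (specRad A0) (specRad A1) with hm | hm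
      · rw [hm]; exact le_csSup hbdd hmem0
      · rw [hm]; exact le_csSup hbdd hmem1
  refine ⟨hgsr, ?_⟩
  rcases max_choice (specRad A0) (specRad A1) with hm | hm
  · refine ⟨1, le_refl 1, A0, ?_, ?_⟩
    · refine ⟨[A0], rfl, ?_, List.prod_singleton.symm⟩
      intro X hX
      rw [List.mem_singleton] at hX
      subst hX
      exact Set.mem_insert _ _
    · rw [hgsr, hm, Nat.cast_one, div_one, Real.rpow_one]
  · refine ⟨1, le_refl 1, A1, ?_, ?_⟩
    · refine ⟨[A1], rfl, ?_, List.prod_singleton.symm⟩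
      intro X hX
      rw [List.mem_singleton] at hX
      subst hX
      exact Set.mem_insert_of_mem _ rfl
    · rw [hgsr, hm, Nat.cast_one, div_one, Real.rpow_one]
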